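/- Let $\Delta \in [0,1]$ and define $\zeta : [0,1] \to \mathbb{R}$ by $\zeta(z) = z - \Delta \frac{1}{\pi}(\sqrt{1-(1-2z)^2} - (1-2z)\arccos(1-2z))$. Then $\zeta$ admits the expansion $\zeta(z) = z - \Delta \sum_{r \in 2\mathbb{N}+3} b_r z^{r/2}$ where $b_r = \frac{2}{\pi} \frac{((\frac{r}{r-2})^2-1)((r-2)!!)^2}{r!}$ for odd $r \geq 3$. -/

import Mathlib

set_option maxHeartbeats 1000000

open Real Nat

/-- The coefficient `b_r` for odd `r = 2n+3`:
`b_r = (2/π) ((r/(r-2))² - 1)((r-2)!!)² / r!`. -/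
noncomputable def brCoef (n : ℕ) : ℝ :=
  (2 / π) * ((((2 * n + 3 : ℕ) : ℝ) / ((2 * n + 1 : ℕ) : ℝ)) ^ 2 - 1) *
    ((Nat.doubleFactorial (2 * n + 1) : ℝ)) ^ 2 / (Nat.factorial (2 * n + 3))

/-- `cc n = (2n-1)!!/(2n)!!`, defined by recursion. -/
noncomputable def cc : ℕ → ℝ
  | 0 => 1
  | n + 1 => cc n * (2 * n + 1) / (2 * n + 2)

lemma cc_pos (n : ℕ) : 0 < cc n := by
  induction n with
  | zero => norm_num [cc]
  | succ m ih => rw [cc]; positivity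

lemma cc_le_one (n : ℕ) : cc n ≤ 1 := by
  induction n with
  | zero => norm_num [cc]
  | succ m ih =>
    rw [cc, div_le_one (by positivity)]
    nlinarith [cc_pos m]

lemma cc_rec (n : ℕ) : (2 * (n : ℝ) + 2) * cc (n + 1) = (2 * n + 1) * cc n := by
  rw [cc]
  field_simp

/-- relation to double factorials -/
lemma cc_df (n : ℕ) : cc n * ((2 * (n : ℝ) + 1) * 2 ^ n * (n ! : ℝ)) =
    ((2 * n + 1)‼ : ℝ) := by
  induction n with
  | zero => norm_num [cc, Nat.doubleFactorial]
  | succ m ih =>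
    have h2 : 2 * (m + 1) + 1 = 2 * m + 1 + 2 := by ring
    rw [h2, Nat.doubleFactorial_add_two]
    rw [show cc (m + 1) = cc m * (2 * (m:ℝ) + 1) / (2 * (m:ℝ) + 2) from rfl,
      Nat.factorial_succ]
    push_cast
    push_cast at ih
    rw [← ih]
    have hne : (2 * (m:ℝ) + 2) ≠ 0 := by positivity
    field_simp
    ring

lemma brCoef_eq (n : ℕ) :
    brCoef n = 2 / π * (4 * cc n / ((2 * (n : ℝ) + 1) * (2 * (n : ℝ) + 3))) := by
  have hfac : ((2 * n + 3)! : ℝ) =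
      (2 * (n : ℝ) + 3) * ((2 * n + 1)‼ : ℝ) * (2 ^ (n + 1) * ((n + 1)! : ℝ)) := by
    have h1 : (2 * n + 3)! = (2 * n + 2 + 1)! := by ring_nf
    have h2 : (2 * n + 2 + 1)! = (2 * n + 2 + 1)‼ * (2 * n + 2)‼ :=
      Nat.factorial_eq_mul_doubleFactorial _
    have h3 : (2 * n + 2 + 1)‼ = (2 * n + 1 + 2)‼ := by ring_nf
    have h4 : (2 * n + 1 + 2)‼ = (2 * n + 1 + 2) * (2 * n + 1)‼ :=
      Nat.doubleFactorial_add_two _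
    have h5 : (2 * n + 2)‼ = (2 * (n + 1))‼ := by ring_nf
    have h6 : (2 * (n + 1))‼ = 2 ^ (n + 1) * (n + 1)! := Nat.doubleFactorial_two_mul _
    rw [h1, h2, h3, h4, h5, h6]
    push_cast
    ring
  have hd := cc_df n
  rw [brCoef, hfac]
  have hπ : (π : ℝ) ≠ 0 := Real.pi_pos.ne'
  have hne1 : (2 * (n : ℝ) + 1) ≠ 0 := by positivity
  have hne3 : (2 * (n : ℝ) + 3) ≠ 0 := by positivity
  have hratio : (((2 * n + 3 : ℕ) : ℝ) / ((2 * n + 1 : ℕ) : ℝ)) ^ 2 - 1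
      = 4 * (2 * (n : ℝ) + 2) / (2 * (n : ℝ) + 1) ^ 2 := by
    have h1 : ((2 * n + 1 : ℕ) : ℝ) = 2 * (n : ℝ) + 1 := by push_cast; ring
    have h3 : ((2 * n + 3 : ℕ) : ℝ) = 2 * (n : ℝ) + 3 := by push_cast; ring
    rw [h1, h3]
    field_simp
    ring
  rw [hratio, ← hd]
  have hfact : ((n + 1)! : ℝ) = ((n : ℝ) + 1) * (n ! : ℝ) := by
    rw [Nat.factorial_succ]; push_cast; ring
  rw [hfact]
  have hnen : ((n : ℝ) + 1) ≠ 0 := by positivity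
  have hnef : (n ! : ℝ) ≠ 0 := by positivity
  have hne2 : (2 : ℝ) ^ n ≠ 0 := by positivity
  have hcc : cc n ≠ 0 := (cc_pos n).ne'
  rw [pow_succ]
  field_simp
  ring

/-- the sum `S x = ∑ cc n x^n`. -/
noncomputable def Sfun (x : ℝ) : ℝ := ∑' n : ℕ, cc n * x ^ n

/-- the (term-by-term) derivative of `S`. -/
noncomputable def Dfun (x : ℝ) : ℝ := ∑' n : ℕ, cc n * ((n : ℝ) * x ^ (n - 1))

/-- the sum `H s = ∑ cc n s^(2n+1)/(2n+1)`, equal to `arcsin`. -/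
noncomputable def Hfun (s : ℝ) : ℝ := ∑' n : ℕ, cc n / (2 * (n : ℝ) + 1) * s ^ (2 * n + 1)

/-- the main series. -/
noncomputable def Afun (s : ℝ) : ℝ :=
  ∑' n : ℕ, 4 * cc n / ((2 * (n : ℝ) + 1) * (2 * (n : ℝ) + 3)) * s ^ (2 * n + 3)

lemma summable_aux (C : ℝ) {x : ℝ} (hx : |x| < 1) :
    Summable fun n : ℕ => C * (((n : ℝ) + 1) * |x| ^ n) := by
  have h1 : Summable fun n : ℕ => ((n : ℝ) ^ 1) * |x| ^ n :=
    summable_pow_mul_geometric_of_norm_lt_one 1 (by rwa [Real.norm_eq_abs, abs_abs])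
  have h2 : Summable fun n : ℕ => |x| ^ n :=
    summable_geometric_of_lt_one (abs_nonneg x) hx
  exact ((h1.add h2).congr fun n => by push_cast; ring).mul_left C

lemma summable_aux2 (C : ℝ) {r : ℝ} (h0 : 0 ≤ r) (hr : r < 1) :
    Summable fun n : ℕ => C * (((n : ℝ) + 1) * r ^ (n - 1)) := by
  apply (summable_nat_add_iff 1).1
  have h1 : Summable fun n : ℕ => ((n : ℝ) ^ 1) * r ^ n :=
    summable_pow_mul_geometric_of_norm_lt_one 1
      (by rwa [Real.norm_eq_abs, abs_of_nonneg h0])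
  have h2 : Summable fun n : ℕ => r ^ n := summable_geometric_of_lt_one h0 hr
  refine (((h1.add (h2.add h2)).mul_left C).congr fun n => ?_)
  have he : n + 1 - 1 = n := by omega
  rw [he]
  push_cast
  ring

lemma summable_aux3 (C : ℝ) {r : ℝ} (h0 : 0 ≤ r) (hr : r < 1) :
    Summable fun n : ℕ => C * (((n : ℝ) + 1) * r ^ n) := by
  have h := summable_aux C (x := r) (by rwa [abs_of_nonneg h0])
  simpa [abs_of_nonneg h0] using h

lemma summable_S {x : ℝ} (hx : |x| < 1) : Summable fun n : ℕ => cc n * x ^ n := by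
  refine Summable.of_norm_bounded (summable_aux 1 hx) fun n => ?_
  rw [Real.norm_eq_abs, abs_mul, abs_pow, abs_of_nonneg (cc_pos n).le, one_mul]
  have hp : (0:ℝ) ≤ |x| ^ n := pow_nonneg (abs_nonneg x) n
  calc cc n * |x| ^ n ≤ |x| ^ n := mul_le_of_le_one_left hp (cc_le_one n)
    _ ≤ ((n:ℝ) + 1) * |x| ^ n :=
        le_mul_of_one_le_left hp (by linarith [Nat.cast_nonneg (α := ℝ) n])

lemma summable_D {x : ℝ} (hx : |x| < 1) :
    Summable fun n : ℕ => cc n * ((n : ℝ) * x ^ (n - 1)) := by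
  refine Summable.of_norm_bounded (summable_aux2 1 (abs_nonneg x) hx) fun n => ?_
  rw [Real.norm_eq_abs, abs_mul, abs_mul, abs_pow, abs_of_nonneg (cc_pos n).le,
    Nat.abs_cast, one_mul]
  have hpn : (0:ℝ) ≤ |x| ^ (n - 1) := pow_nonneg (abs_nonneg x) _
  have hn : (0:ℝ) ≤ (n:ℝ) := Nat.cast_nonneg n
  calc cc n * ((n : ℝ) * |x| ^ (n-1)) ≤ (n : ℝ) * |x| ^ (n-1) :=
        mul_le_of_le_one_left (mul_nonneg hn hpn) (cc_le_one n)
    _ ≤ ((n : ℝ) + 1) * |x| ^ (n-1) :=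
        mul_le_mul_of_nonneg_right (by linarith) hpn

lemma key {x : ℝ} (hx : |x| < 1) : 2 * (1 - x) * Dfun x = Sfun x := by
  have hS := summable_S hx
  have hD := summable_D hx
  have hDs : Summable fun n : ℕ => cc (n + 1) * (((n : ℝ) + 1) * x ^ n) := by
    refine ((summable_nat_add_iff 1).2 hD).congr fun n => ?_
    have he : n + 1 - 1 = n := by omega
    rw [he]
    push_cast
    ring
  have hxD : Summable fun n : ℕ => cc n * ((n : ℝ) * x ^ n) := by
    refine Summable.of_norm_bounded (summable_aux 1 hx) fun n => ?_
    rw [Real.norm_eq_abs, abs_mul, abs_mul, abs_pow, abs_of_nonneg (cc_pos n).le,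
      Nat.abs_cast, one_mul]
    have hpn : (0:ℝ) ≤ |x| ^ n := pow_nonneg (abs_nonneg x) _
    have hn : (0:ℝ) ≤ (n:ℝ) := Nat.cast_nonneg n
    calc cc n * ((n : ℝ) * |x| ^ n) ≤ (n : ℝ) * |x| ^ n :=
          mul_le_of_le_one_left (mul_nonneg hn hpn) (cc_le_one n)
      _ ≤ ((n : ℝ) + 1) * |x| ^ n := mul_le_mul_of_nonneg_right (by linarith) hpn
  have hshift : Dfun x = ∑' n : ℕ, cc (n + 1) * (((n : ℝ) + 1) * x ^ n) := by
    rw [Dfun, Summable.tsum_eq_zero_add hD]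
    simp only [Nat.cast_zero, zero_mul, mul_zero, zero_add]
    refine tsum_congr fun n => ?_
    have he : n + 1 - 1 = n := by omega
    rw [he]
    push_cast
    ring
  have hxDfun : x * Dfun x = ∑' n : ℕ, cc n * ((n : ℝ) * x ^ n) := by
    rw [Dfun, ← tsum_mul_left]
    refine tsum_congr fun n => ?_
    cases n with
    | zero => simp
    | succ m =>
      have he : m + 1 - 1 = m := by omega
      rw [he, pow_succ]
      push_cast
      ring
  have h2D : 2 * Dfun x = ∑' n : ℕ, 2 * (cc (n + 1) * (((n : ℝ) + 1) * x ^ n)) := by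
    rw [hshift, tsum_mul_left]
  have h2xD : 2 * (x * Dfun x) = ∑' n : ℕ, 2 * (cc n * ((n : ℝ) * x ^ n)) := by
    rw [hxDfun, tsum_mul_left]
  have hmain : 2 * Dfun x - 2 * (x * Dfun x) = Sfun x := by
    rw [h2D, h2xD, ← Summable.tsum_sub (hDs.mul_left 2) (hxD.mul_left 2)]
    refine tsum_congr fun n => ?_
    have hrec := cc_rec n
    have hstep : 2 * (cc (n + 1) * (((n : ℝ) + 1) * x ^ n)) - 2 * (cc n * ((n : ℝ) * x ^ n))
        = ((2 * (n:ℝ) + 2) * cc (n+1) - 2 * (n:ℝ) * cc n) * x ^ n := by ring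
    rw [hstep, hrec]
    ring
  linarith [hmain]

lemma hasDerivAt_Sfun {x : ℝ} (hx : |x| < 1) : HasDerivAt Sfun (Dfun x) x := by
  obtain ⟨r, hr0, hxr, hr1⟩ : ∃ r : ℝ, 0 ≤ r ∧ |x| < r ∧ r < 1 :=
    ⟨(1 + |x|) / 2, by positivity, by linarith [abs_nonneg x], by linarith⟩
  have hrpos : (0:ℝ) < r := lt_of_le_of_lt (abs_nonneg x) hxr
  have := hasDerivAt_tsum_of_isPreconnected
    (u := fun n : ℕ => 1 * (((n : ℝ) + 1) * r ^ (n - 1)))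
    (𝕜 := ℝ) (F := ℝ)
    (g := fun n y => cc n * y ^ n)
    (g' := fun n y => cc n * ((n : ℝ) * y ^ (n - 1)))
    (t := Set.Ioo (-r) r) (y₀ := 0) (y := x)
    (summable_aux2 1 hr0 hr1) isOpen_Ioo (isPreconnected_Ioo)
    (fun n y _ => (hasDerivAt_pow n y).const_mul (cc n))
    (fun n y hy => ?_) (by rw [Set.mem_Ioo]; constructor <;> linarith)
    ?_ ?_
  · exact this
  · show ‖cc n * ((n:ℝ) * y ^ (n - 1))‖ ≤ 1 * (((n:ℝ) + 1) * r ^ (n - 1))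
    rw [Real.norm_eq_abs, abs_mul, abs_mul, abs_pow, abs_of_nonneg (cc_pos n).le,
      Nat.abs_cast, one_mul]
    have hyr : |y| ≤ r := by
      rcases hy with ⟨h1, h2⟩
      rw [abs_le]; constructor <;> linarith
    have hp : |y| ^ (n - 1) ≤ r ^ (n - 1) := pow_le_pow_left₀ (abs_nonneg y) hyr _
    have hrp : (0:ℝ) ≤ r ^ (n - 1) := pow_nonneg hr0 _
    have hyp : (0:ℝ) ≤ |y| ^ (n - 1) := pow_nonneg (abs_nonneg y) _
    have hn : (0:ℝ) ≤ (n:ℝ) := Nat.cast_nonneg n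
    calc cc n * ((n : ℝ) * |y| ^ (n-1)) ≤ (n : ℝ) * |y| ^ (n-1) :=
          mul_le_of_le_one_left (mul_nonneg hn hyp) (cc_le_one n)
      _ ≤ (n : ℝ) * r ^ (n-1) := mul_le_mul_of_nonneg_left hp hn
      _ ≤ ((n : ℝ) + 1) * r ^ (n-1) := mul_le_mul_of_nonneg_right (by linarith) hrp
  · exact summable_S (by norm_num)
  · rw [Set.mem_Ioo]; constructor <;> linarith [neg_abs_le x, le_abs_self x]

lemma Sfun_zero : Sfun 0 = 1 := by
  rw [Sfun]
  rw [tsum_eq_single 0 (fun n hn => by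
    cases n with
    | zero => exact absurd rfl hn
    | succ m => simp)]
  norm_num [cc]

lemma Sfun_mul_sqrt {y : ℝ} (h0 : 0 ≤ y) (h1 : y < 1) :
    Sfun y * Real.sqrt (1 - y) = 1 := by
  have habs : ∀ x ∈ Set.Icc (0:ℝ) y, |x| < 1 := by
    intro x hx
    rw [abs_of_nonneg hx.1]
    linarith [hx.2]
  have hQderiv : ∀ x ∈ Set.Ico (0:ℝ) y,
      HasDerivWithinAt (fun t => Sfun t * Real.sqrt (1 - t)) 0 (Set.Ici x) x := by
    intro x hx
    have hx1 : |x| < 1 := habs x ⟨hx.1, hx.2.le⟩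
    have hxlt : x < 1 := lt_of_le_of_lt (le_abs_self x) hx1
    have hpos : (0:ℝ) < 1 - x := by linarith
    have hsqpos : (0:ℝ) < Real.sqrt (1 - x) := Real.sqrt_pos.2 hpos
    have hS := hasDerivAt_Sfun hx1
    have hlin : HasDerivAt (fun t : ℝ => 1 - t) (-1) x := by
      simpa using ((hasDerivAt_id x).const_sub 1)
    have hsqrt : HasDerivAt (fun t : ℝ => Real.sqrt (1 - t))
        ((-1) / (2 * Real.sqrt (1 - x))) x := hlin.sqrt (by positivity)
    have hQ : HasDerivAt (fun t => Sfun t * Real.sqrt (1 - t))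
        (Dfun x * Real.sqrt (1 - x) + Sfun x * ((-1) / (2 * Real.sqrt (1 - x)))) x :=
      hS.mul hsqrt
    have hval : Dfun x * Real.sqrt (1 - x) + Sfun x * ((-1) / (2 * Real.sqrt (1 - x))) = 0 := by
      have hkey := key hx1
      have hsq : Real.sqrt (1 - x) ^ 2 = 1 - x := Real.sq_sqrt hpos.le
      have hne : Real.sqrt (1 - x) ≠ 0 := hsqpos.ne'
      have hrw : Sfun x = 2 * (1 - x) * Dfun x := hkey.symm
      have e3 : (Real.sqrt (1 - x) ^ 2 - (1 - x)) / Real.sqrt (1 - x)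
          = Real.sqrt (1 - x) - (1 - x) / Real.sqrt (1 - x) := by
        rw [sub_div, sq, mul_div_assoc, div_self hne, mul_one]
      have e2 : Real.sqrt (1 - x) - (1 - x) / Real.sqrt (1 - x) = 0 := by
        rw [← e3, hsq, sub_self, zero_div]
      rw [hrw]
      linear_combination (Dfun x) * e2
    rw [hval] at hQ
    exact hQ.hasDerivWithinAt
  have hQcont : ContinuousOn (fun t => Sfun t * Real.sqrt (1 - t)) (Set.Icc 0 y) := by
    refine ContinuousOn.mul ?_ ?_
    · intro x hx
      exact ((hasDerivAt_Sfun (habs x hx)).continuousAt).continuousWithinAt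
    · exact (Real.continuous_sqrt.comp (continuous_const.sub continuous_id)).continuousOn
  have h := constant_of_has_deriv_right_zero hQcont hQderiv y ⟨h0, le_refl y⟩
  simp only [Sfun_zero, sub_zero, Real.sqrt_one, one_mul] at h
  exact h

lemma Sfun_eq {y : ℝ} (h0 : 0 ≤ y) (h1 : y < 1) :
    Sfun y = 1 / Real.sqrt (1 - y) := by
  have h := Sfun_mul_sqrt h0 h1
  have hpos : (0:ℝ) < Real.sqrt (1 - y) := Real.sqrt_pos.2 (by linarith)
  field_simp
  linarith

lemma hasDerivAt_Hfun {x : ℝ} (hx : |x| < 1) :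
    HasDerivAt Hfun (∑' n : ℕ, cc n * x ^ (2 * n)) x := by
  obtain ⟨r, hr0, hxr, hr1⟩ : ∃ r : ℝ, 0 ≤ r ∧ |x| < r ∧ r < 1 :=
    ⟨(1 + |x|) / 2, by positivity, by linarith [abs_nonneg x], by linarith⟩
  have hrpos : (0:ℝ) < r := lt_of_le_of_lt (abs_nonneg x) hxr
  have hr2 : r ^ 2 < 1 := by nlinarith
  have hder : ∀ (n : ℕ) (y : ℝ),
      HasDerivAt (fun y => cc n / (2 * (n:ℝ) + 1) * y ^ (2 * n + 1)) (cc n * y ^ (2 * n)) y := by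
    intro n y
    have h := (hasDerivAt_pow (2 * n + 1) y).const_mul (cc n / (2 * (n:ℝ) + 1))
    have he : 2 * n + 1 - 1 = 2 * n := by omega
    rw [he] at h
    refine h.congr_deriv ?_
    have hne : (2 * (n:ℝ) + 1) ≠ 0 := by positivity
    push_cast
    rw [div_mul_eq_mul_div, div_eq_iff hne]
    ring
  have := hasDerivAt_tsum_of_isPreconnected
    (u := fun n : ℕ => 1 * (((n : ℝ) + 1) * (r ^ 2) ^ n))
    (𝕜 := ℝ) (F := ℝ)
    (g := fun n y => cc n / (2 * (n:ℝ) + 1) * y ^ (2 * n + 1))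
    (g' := fun n y => cc n * y ^ (2 * n))
    (t := Set.Ioo (-r) r) (y₀ := 0) (y := x)
    (summable_aux3 1 (by positivity) hr2) isOpen_Ioo isPreconnected_Ioo
    (fun n y _ => hder n y)
    (fun n y hy => ?_) (by rw [Set.mem_Ioo]; constructor <;> linarith)
    ?_ ?_
  · exact this
  · show ‖cc n * y ^ (2 * n)‖ ≤ 1 * (((n:ℝ) + 1) * (r ^ 2) ^ n)
    rw [Real.norm_eq_abs, abs_mul, abs_pow, abs_of_nonneg (cc_pos n).le, one_mul]
    have hyr : |y| ≤ r := by
      rcases hy with ⟨hA, hB⟩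
      rw [abs_le]; constructor <;> linarith
    have hp : |y| ^ (2 * n) ≤ r ^ (2 * n) := pow_le_pow_left₀ (abs_nonneg y) hyr _
    have hid : r ^ (2 * n) = (r ^ 2) ^ n := by rw [← pow_mul]
    rw [← hid]
    have hrp : (0:ℝ) ≤ r ^ (2 * n) := pow_nonneg hr0 _
    have hyp : (0:ℝ) ≤ |y| ^ (2 * n) := pow_nonneg (abs_nonneg y) _
    calc cc n * |y| ^ (2*n) ≤ |y| ^ (2*n) := mul_le_of_le_one_left hyp (cc_le_one n)
      _ ≤ r ^ (2*n) := hp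
      _ ≤ ((n:ℝ) + 1) * r ^ (2*n) :=
          le_mul_of_one_le_left hrp (by linarith [Nat.cast_nonneg (α := ℝ) n])
  · refine Summable.of_norm_bounded (summable_aux 1 (by norm_num : |(0:ℝ)| < 1)) fun n => ?_
    show ‖cc n / (2 * (n:ℝ) + 1) * (0:ℝ) ^ (2 * n + 1)‖ ≤ 1 * (((n:ℝ) + 1) * |(0:ℝ)| ^ n)
    rw [zero_pow (by omega : 2 * n + 1 ≠ 0), mul_zero, norm_zero]
    positivity
  · rw [Set.mem_Ioo]; constructor <;> linarith [neg_abs_le x, le_abs_self x]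

lemma Hfun_eq_arcsin {s : ℝ} (h0 : 0 ≤ s) (h1 : s < 1) : Hfun s = Real.arcsin s := by
  have hmem : ∀ x ∈ Set.Icc (0:ℝ) s, |x| < 1 := fun x hx => by
    rw [abs_of_nonneg hx.1]; linarith [hx.2]
  have := eq_of_has_deriv_right_eq (a := 0) (b := s)
    (f' := fun x => 1 / Real.sqrt (1 - x ^ 2))
    (f := Hfun) (g := Real.arcsin)
    (fun x hx => ?_) (fun x hx => ?_) (fun x hx => ?_)
    (Real.continuous_arcsin.continuousOn) ?_
  · exact this s ⟨h0, le_refl s⟩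
  · -- Hfun derivative
    have hx1 : |x| < 1 := hmem x ⟨hx.1, hx.2.le⟩
    have h := hasDerivAt_Hfun hx1
    have hx0 : 0 ≤ x := hx.1
    have hxlt : x < 1 := lt_of_le_of_lt (le_abs_self x) hx1
    have hxsq : 0 ≤ x ^ 2 := sq_nonneg x
    have hxsq1 : x ^ 2 < 1 := by nlinarith
    have hval : (∑' n : ℕ, cc n * x ^ (2 * n)) = 1 / Real.sqrt (1 - x ^ 2) := by
      have hSx : (∑' n : ℕ, cc n * x ^ (2 * n)) = Sfun (x ^ 2) := by
        rw [Sfun]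
        refine tsum_congr fun n => ?_
        rw [← pow_mul]
      rw [hSx, Sfun_eq hxsq hxsq1]
    rw [hval] at h
    exact h.hasDerivWithinAt
  · -- arcsin derivative
    have hx1 : |x| < 1 := hmem x ⟨hx.1, hx.2.le⟩
    have hxlt : x < 1 := lt_of_le_of_lt (le_abs_self x) hx1
    have hxgt : -1 < x := by linarith [hx.1]
    exact (Real.hasDerivAt_arcsin (by linarith) (by linarith)).hasDerivWithinAt
  · -- continuity of Hfun
    exact ((hasDerivAt_Hfun (hmem x hx)).continuousAt).continuousWithinAt
  · -- Hfun 0 = arcsin 0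
    have hH0 : Hfun 0 = 0 := by
      rw [Hfun]
      have hterm : ∀ n : ℕ, cc n / (2 * (n:ℝ) + 1) * (0:ℝ) ^ (2 * n + 1) = 0 := fun n => by
        simp
      simp only [hterm, tsum_zero]
    rw [hH0, Real.arcsin_zero]

lemma summable_u4 : Summable fun n : ℕ => 4 / ((n : ℝ) + 1) ^ 2 := by
  have h1 : Summable fun n : ℕ => 1 / ((n : ℝ)) ^ 2 := summable_one_div_nat_pow.2 one_lt_two
  have h2 : Summable fun n : ℕ => 1 / ((n : ℝ) + 1) ^ 2 := by
    refine ((summable_nat_add_iff 1).2 h1).congr fun n => ?_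
    push_cast
    ring_nf
  simpa [div_eq_mul_inv, mul_comm] using h2.mul_left 4

lemma Abound {x : ℝ} (hx : |x| ≤ 1) (n : ℕ) :
    ‖4 * cc n / ((2 * (n : ℝ) + 1) * (2 * (n : ℝ) + 3)) * x ^ (2 * n + 3)‖
      ≤ 4 / ((n : ℝ) + 1) ^ 2 := by
  have hnn : (0:ℝ) ≤ 4 * cc n / ((2 * (n:ℝ) + 1) * (2 * (n:ℝ) + 3)) :=
    div_nonneg (by nlinarith [cc_pos n]) (by positivity)
  rw [Real.norm_eq_abs, abs_mul, abs_pow, abs_of_nonneg hnn]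
  have hsp : |x| ^ (2 * n + 3) ≤ 1 := pow_le_one₀ (abs_nonneg x) hx
  have hden : ((n:ℝ) + 1) ^ 2 ≤ (2 * (n:ℝ) + 1) * (2 * (n:ℝ) + 3) := by
    nlinarith [Nat.cast_nonneg (α := ℝ) n]
  have hpos : (0:ℝ) < (2 * (n:ℝ) + 1) * (2 * (n:ℝ) + 3) := by positivity
  have hpos2 : (0:ℝ) < ((n:ℝ) + 1) ^ 2 := by positivity
  have hstep : 4 * cc n / ((2 * (n:ℝ) + 1) * (2 * (n:ℝ) + 3)) ≤ 4 / ((n:ℝ) + 1) ^ 2 := by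
    rw [div_le_div_iff₀ hpos hpos2]
    nlinarith [cc_le_one n, cc_pos n]
  calc 4 * cc n / ((2 * (n:ℝ) + 1) * (2 * (n:ℝ) + 3)) * |x| ^ (2 * n + 3)
      ≤ 4 * cc n / ((2 * (n:ℝ) + 1) * (2 * (n:ℝ) + 3)) * 1 :=
        mul_le_mul_of_nonneg_left hsp (by positivity)
    _ ≤ 4 / ((n:ℝ) + 1) ^ 2 := by linarith

lemma summable_A {s : ℝ} (hs : |s| ≤ 1) :
    Summable fun n : ℕ =>
      4 * cc n / ((2 * (n : ℝ) + 1) * (2 * (n : ℝ) + 3)) * s ^ (2 * n + 3) :=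
  Summable.of_norm_bounded summable_u4 (Abound hs)

lemma hasDerivAt_Afun {x : ℝ} (hx : |x| < 1) :
    HasDerivAt Afun (∑' n : ℕ, 4 * cc n / (2 * (n : ℝ) + 1) * x ^ (2 * n + 2)) x := by
  obtain ⟨r, hr0, hxr, hr1⟩ : ∃ r : ℝ, 0 ≤ r ∧ |x| < r ∧ r < 1 :=
    ⟨(1 + |x|) / 2, by positivity, by linarith [abs_nonneg x], by linarith⟩
  have hrpos : (0:ℝ) < r := lt_of_le_of_lt (abs_nonneg x) hxr
  have hr2 : r ^ 2 < 1 := by nlinarith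
  have hder : ∀ (n : ℕ) (y : ℝ),
      HasDerivAt (fun y => 4 * cc n / ((2 * (n:ℝ) + 1) * (2 * (n:ℝ) + 3)) * y ^ (2 * n + 3))
        (4 * cc n / (2 * (n:ℝ) + 1) * y ^ (2 * n + 2)) y := by
    intro n y
    have h := (hasDerivAt_pow (2 * n + 3) y).const_mul
      (4 * cc n / ((2 * (n:ℝ) + 1) * (2 * (n:ℝ) + 3)))
    have he : 2 * n + 3 - 1 = 2 * n + 2 := by omega
    rw [he] at h
    refine h.congr_deriv ?_
    have hne1 : (2 * (n:ℝ) + 1) ≠ 0 := by positivity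
    have hne3 : (2 * (n:ℝ) + 3) ≠ 0 := by positivity
    push_cast
    rw [div_mul_eq_mul_div, div_mul_eq_mul_div, div_eq_div_iff (by positivity) (by positivity)]
    ring
  have := hasDerivAt_tsum_of_isPreconnected
    (u := fun n : ℕ => 4 * (((n : ℝ) + 1) * (r ^ 2) ^ n))
    (𝕜 := ℝ) (F := ℝ)
    (g := fun n y => 4 * cc n / ((2 * (n:ℝ) + 1) * (2 * (n:ℝ) + 3)) * y ^ (2 * n + 3))
    (g' := fun n y => 4 * cc n / (2 * (n:ℝ) + 1) * y ^ (2 * n + 2))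
    (t := Set.Ioo (-r) r) (y₀ := 0) (y := x)
    (summable_aux3 4 (by positivity) hr2) isOpen_Ioo isPreconnected_Ioo
    (fun n y _ => hder n y)
    (fun n y hy => ?_) (by rw [Set.mem_Ioo]; constructor <;> linarith)
    ?_ ?_
  · exact this
  · show ‖4 * cc n / (2 * (n:ℝ) + 1) * y ^ (2 * n + 2)‖ ≤ 4 * (((n:ℝ) + 1) * (r ^ 2) ^ n)
    have hnn : (0:ℝ) ≤ 4 * cc n / (2 * (n:ℝ) + 1) :=
      div_nonneg (by nlinarith [cc_pos n]) (by positivity)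
    rw [Real.norm_eq_abs, abs_mul, abs_pow, abs_of_nonneg hnn]
    have hyr : |y| ≤ r := by
      rcases hy with ⟨hA, hB⟩
      rw [abs_le]; constructor <;> linarith
    have hp : |y| ^ (2 * n + 2) ≤ r ^ (2 * n + 2) := pow_le_pow_left₀ (abs_nonneg y) hyr _
    have hr22 : r ^ (2 * n + 2) ≤ (r ^ 2) ^ n := by
      have hid : r ^ (2 * n + 2) = (r ^ 2) ^ n * r ^ 2 := by
        rw [← pow_mul, ← pow_add]
      rw [hid]
      have h1 : (0:ℝ) ≤ (r ^ 2) ^ n := by positivity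
      nlinarith [hr1, hr0]
    have hcoef : 4 * cc n / (2 * (n:ℝ) + 1) ≤ 4 := by
      rw [div_le_iff₀ (by positivity)]
      nlinarith [cc_le_one n, cc_pos n, Nat.cast_nonneg (α := ℝ) n]
    have h2 : (0:ℝ) ≤ (r^2)^n := by positivity
    have hyp : (0:ℝ) ≤ |y| ^ (2*n+2) := pow_nonneg (abs_nonneg y) _
    calc 4 * cc n / (2 * (n:ℝ) + 1) * |y| ^ (2*n+2)
        ≤ 4 * ((r^2)^n) := mul_le_mul hcoef (hp.trans hr22) hyp (by norm_num)
      _ ≤ 4 * (((n:ℝ)+1) * (r^2)^n) := by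
          have h3 : (r^2)^n ≤ ((n:ℝ)+1) * (r^2)^n :=
            le_mul_of_one_le_left h2 (by linarith [Nat.cast_nonneg (α := ℝ) n])
          linarith
  · refine Summable.of_norm_bounded (summable_aux 1 (by norm_num : |(0:ℝ)| < 1)) fun n => ?_
    show ‖4 * cc n / ((2 * (n:ℝ) + 1) * (2 * (n:ℝ) + 3)) * (0:ℝ) ^ (2 * n + 3)‖
        ≤ 1 * (((n:ℝ) + 1) * |(0:ℝ)| ^ n)
    rw [zero_pow (by omega : 2 * n + 3 ≠ 0), mul_zero, norm_zero]
    positivity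
  · rw [Set.mem_Ioo]; constructor <;> linarith [neg_abs_le x, le_abs_self x]

/-- The main identity on `[0,1]`. -/
lemma Afun_eq {s : ℝ} (h0 : 0 ≤ s) (h1 : s ≤ 1) :
    Afun s = s * Real.sqrt (1 - s ^ 2) - (1 - 2 * s ^ 2) * Real.arcsin s := by
  have := eq_of_has_deriv_right_eq (a := 0) (b := 1)
    (f' := fun x => 4 * x * Real.arcsin x)
    (f := Afun)
    (g := fun s => s * Real.sqrt (1 - s ^ 2) - (1 - 2 * s ^ 2) * Real.arcsin s)
    (fun x hx => ?_) (fun x hx => ?_) ?_ ?_ ?_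
  · exact this s ⟨h0, h1⟩
  · -- Afun derivative
    have hx1 : |x| < 1 := by rw [abs_of_nonneg hx.1]; exact hx.2
    have h := hasDerivAt_Afun hx1
    have hval : (∑' n : ℕ, 4 * cc n / (2 * (n:ℝ) + 1) * x ^ (2 * n + 2))
        = 4 * x * Real.arcsin x := by
      rw [← Hfun_eq_arcsin hx.1 hx.2, Hfun, ← tsum_mul_left]
      refine tsum_congr fun n => ?_
      have he : 2 * n + 2 = 2 * n + 1 + 1 := by omega
      rw [he, pow_succ]
      ring
    rw [hval] at h
    exact h.hasDerivWithinAt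
  · -- g derivative
    have hx0 : 0 ≤ x := hx.1
    have hxlt : x < 1 := hx.2
    have hpos : (0:ℝ) < 1 - x ^ 2 := by nlinarith
    have hsqpos : (0:ℝ) < Real.sqrt (1 - x ^ 2) := Real.sqrt_pos.2 hpos
    have hsq : Real.sqrt (1 - x ^ 2) ^ 2 = 1 - x ^ 2 := Real.sq_sqrt hpos.le
    have hne : Real.sqrt (1 - x ^ 2) ≠ 0 := hsqpos.ne'
    have hquad : HasDerivAt (fun t : ℝ => 1 - t ^ 2) (-(2 * x)) x := by
      have h := (hasDerivAt_pow 2 x).const_sub 1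
      norm_num at h
      convert h using 1 <;> ring
    have hsqrt : HasDerivAt (fun t : ℝ => Real.sqrt (1 - t ^ 2))
        ((-(2 * x)) / (2 * Real.sqrt (1 - x ^ 2))) x := hquad.sqrt (by positivity)
    have hmul1 : HasDerivAt (fun t : ℝ => t * Real.sqrt (1 - t ^ 2))
        (1 * Real.sqrt (1 - x ^ 2) + x * ((-(2 * x)) / (2 * Real.sqrt (1 - x ^ 2)))) x :=
      (hasDerivAt_id x).mul hsqrt
    have harc : HasDerivAt Real.arcsin (1 / Real.sqrt (1 - x ^ 2)) x :=
      Real.hasDerivAt_arcsin (by linarith) (by linarith)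
    have hcoefd : HasDerivAt (fun t : ℝ => 1 - 2 * t ^ 2) (-(2 * (2 * x))) x := by
      have h := ((hasDerivAt_pow 2 x).const_mul 2).const_sub 1
      norm_num at h
      convert h using 1 <;> ring
    have hmul2 : HasDerivAt (fun t : ℝ => (1 - 2 * t ^ 2) * Real.arcsin t)
        ((-(2 * (2 * x))) * Real.arcsin x + (1 - 2 * x ^ 2) * (1 / Real.sqrt (1 - x ^ 2))) x :=
      hcoefd.mul harc
    have htot := hmul1.sub hmul2
    have hval : 1 * Real.sqrt (1 - x ^ 2) + x * ((-(2 * x)) / (2 * Real.sqrt (1 - x ^ 2)))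
        - ((-(2 * (2 * x))) * Real.arcsin x + (1 - 2 * x ^ 2) * (1 / Real.sqrt (1 - x ^ 2)))
        = 4 * x * Real.arcsin x := by
      have e3 : (Real.sqrt (1 - x ^ 2) ^ 2 - (1 - x ^ 2)) / Real.sqrt (1 - x ^ 2)
          = Real.sqrt (1 - x ^ 2) - (1 - x ^ 2) / Real.sqrt (1 - x ^ 2) := by
        rw [sub_div, sq, mul_div_assoc, div_self hne, mul_one]
      have e2 : Real.sqrt (1 - x ^ 2) - (1 - x ^ 2) / Real.sqrt (1 - x ^ 2) = 0 := by
        rw [← e3, hsq, sub_self, zero_div]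
      linear_combination e2
    rw [hval] at htot
    exact htot.hasDerivWithinAt
  · -- continuity of Afun
    show ContinuousOn (fun s : ℝ =>
      ∑' n : ℕ, 4 * cc n / ((2 * (n : ℝ) + 1) * (2 * (n : ℝ) + 3)) * s ^ (2 * n + 3))
      (Set.Icc 0 1)
    refine continuousOn_tsum (fun n => ?_) summable_u4 (fun n x hx => ?_)
    · exact (Continuous.continuousOn (by continuity))
    · rcases hx with ⟨hA, hB⟩
      exact Abound (by rw [abs_le]; constructor <;> linarith) n
  · -- continuity of g
    have hc : Continuous fun s : ℝ => s * Real.sqrt (1 - s ^ 2) - (1 - 2 * s ^ 2) * Real.arcsin s := by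
      apply Continuous.sub
      · exact continuous_id.mul (Real.continuous_sqrt.comp (continuous_const.sub (continuous_pow 2)))
      · exact (continuous_const.sub (continuous_const.mul (continuous_pow 2))).mul Real.continuous_arcsin
    exact hc.continuousOn
  · -- values at 0
    have hA0 : Afun 0 = 0 := by
      rw [Afun]
      have hterm : ∀ n : ℕ, 4 * cc n / ((2 * (n:ℝ) + 1) * (2 * (n:ℝ) + 3)) * (0:ℝ) ^ (2 * n + 3)
          = 0 := fun n => by simp
      simp only [hterm, tsum_zero]
    rw [hA0]
    simp

/-- Expansion of the squared cosine distance map: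
`ζ(z) = z - Δ ∑_{r odd ≥ 3} b_r z^{r/2}`. -/
theorem zeta_series (Δ : ℝ) (hΔ : Δ ∈ Set.Icc (0 : ℝ) 1)
    (z : ℝ) (hz : z ∈ Set.Icc (0 : ℝ) 1) :
    Summable (fun n : ℕ => brCoef n * z ^ (((2 * n + 3 : ℕ) : ℝ) / 2)) ∧
    z - Δ * (1 / π) *
        (Real.sqrt (1 - (1 - 2 * z) ^ 2) - (1 - 2 * z) * Real.arccos (1 - 2 * z)) =
      z - Δ * ∑' n : ℕ, brCoef n * z ^ (((2 * n + 3 : ℕ) : ℝ) / 2) := by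
  obtain ⟨hz0, hz1⟩ := hz
  set s : ℝ := Real.sqrt z with hs
  have hs0 : 0 ≤ s := Real.sqrt_nonneg z
  have hs1 : s ≤ 1 := Real.sqrt_le_one.2 hz1
  have hsz : s ^ 2 = z := Real.sq_sqrt hz0
  have hterm : ∀ n : ℕ, z ^ (((2 * n + 3 : ℕ) : ℝ) / 2) = s ^ (2 * n + 3) := by
    intro n
    have h1 : (((2 * n + 3 : ℕ) : ℝ) / 2) = (1 / 2 : ℝ) * ((2 * n + 3 : ℕ) : ℝ) := by ring
    rw [h1, Real.rpow_mul hz0, Real.rpow_natCast]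
    congr 1
    rw [hs, Real.sqrt_eq_rpow]
  have hAsum := summable_A (s := s) (by rw [abs_of_nonneg hs0]; exact hs1)
  have hsummable : Summable (fun n : ℕ => brCoef n * z ^ (((2 * n + 3 : ℕ) : ℝ) / 2)) := by
    refine (hAsum.mul_left (2 / π)).congr fun n => ?_
    rw [brCoef_eq, hterm n]
    ring
  refine ⟨hsummable, ?_⟩
  have htsum : (∑' n : ℕ, brCoef n * z ^ (((2 * n + 3 : ℕ) : ℝ) / 2))
      = 2 / π * Afun s := by
    rw [Afun, ← tsum_mul_left]
    refine tsum_congr fun n => ?_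
    rw [brCoef_eq, hterm n]
    ring
  rw [htsum, Afun_eq hs0 hs1]
  have hz_eq : 1 - 2 * z = 1 - 2 * s ^ 2 := by rw [hsz]
  have hs2 : 0 ≤ 1 - s ^ 2 := by nlinarith
  have hsqrt_eq : Real.sqrt (1 - (1 - 2 * z) ^ 2) = 2 * s * Real.sqrt (1 - s ^ 2) := by
    rw [hz_eq]
    have h1 : 1 - (1 - 2 * s ^ 2) ^ 2 = (2 * s * Real.sqrt (1 - s ^ 2)) ^ 2 := by
      rw [mul_pow, mul_pow, Real.sq_sqrt hs2]
      ring
    rw [h1, Real.sqrt_sq (by positivity)]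
  have harccos : Real.arccos (1 - 2 * z) = 2 * Real.arcsin s := by
    rw [hz_eq]
    have hcos : Real.cos (2 * Real.arcsin s) = 1 - 2 * s ^ 2 := by
      rw [Real.cos_two_mul, Real.cos_arcsin, Real.sq_sqrt hs2]
      ring
    rw [← hcos, Real.arccos_cos]
    · have := Real.arcsin_nonneg.2 hs0
      linarith
    · have := Real.arcsin_le_pi_div_two s
      linarith
  rw [hsqrt_eq, harccos, hz_eq]
  ring
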